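/- Let n ≥ 1, r ≥ 1 and let q = x_0^2 + ⋯ + x_{n-2}^2 + x_{n-1}·x_n ∈ ℂ[x_0,…,x_n]. Then the differential operator (1/4)(∂_0^2 + ⋯ + ∂_{n-2}^2) + ∂_{n-1}∂_n, i.e. q^{-1}(∂) for the inverse quadric q^{-1} = (1/4)(y_0^2 + ⋯ + y_{n-2}^2) + y_{n-1}y_n, satisfies q^{-1}(∂)(q^r) = ( r(r−1) + r(n+1)/2 ) · q^{r−1}. -/

import Mathlib

open MvPolynomial

variable {m : ℕ}

private lemma fold_zero (α : Fin m →₀ ℕ) (l : List (Fin m)) (h : ∀ i ∈ l, α i = 0)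
    (f : MvPolynomial (Fin m) ℂ) :
    l.foldr (fun i g => (fun h => MvPolynomial.pderiv i h)^[α i] g) f = f := by
  induction l with
  | nil => rfl
  | cons a t ih =>
      rw [List.foldr_cons, ih (fun i hi => h i (List.mem_cons_of_mem a hi)),
        h a (List.mem_cons_self), Function.iterate_zero, id]

private lemma fold_single (i : Fin m) (k : ℕ) (α : Fin m →₀ ℕ) (l : List (Fin m))
    (hl : l.Nodup) (hmem : i ∈ l) (hik : α i = k) (h0 : ∀ x ∈ l, x ≠ i → α x = 0)
    (f : MvPolynomial (Fin m) ℂ) :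
    l.foldr (fun i g => (fun h => MvPolynomial.pderiv i h)^[α i] g) f
      = (fun h => MvPolynomial.pderiv i h)^[k] f := by
  induction l with
  | nil => cases hmem
  | cons a t ih =>
      obtain ⟨ha, ht⟩ := List.nodup_cons.mp hl
      rw [List.foldr_cons]
      by_cases hai : a = i
      · subst hai
        rw [fold_zero α t (fun x hx => h0 x (List.mem_cons_of_mem a hx)
          (fun hxa => ha (hxa ▸ hx))), hik]
      · have hit : i ∈ t := by
          rcases List.mem_cons.mp hmem with h' | h'
          · exact absurd h'.symm hai
          · exact h'
        rw [h0 a (List.mem_cons_self) hai, Function.iterate_zero, id,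
          ih ht hit (fun x hx hxi => h0 x (List.mem_cons_of_mem a hx) hxi)]

private lemma pderiv_comm' (i j : Fin m) (f : MvPolynomial (Fin m) ℂ) :
    pderiv i (pderiv j f) = pderiv j (pderiv i f) := by
  induction f using MvPolynomial.induction_on' with
  | monomial s a =>
      rcases eq_or_ne i j with rfl | hij
      · rfl
      · simp only [pderiv_monomial]
        have e1 : (s - Finsupp.single j 1 : Fin m →₀ ℕ) i = s i := by
          simp [Finsupp.single_apply, if_neg (fun h : j = i => hij h.symm)]
        have e2 : (s - Finsupp.single i 1 : Fin m →₀ ℕ) j = s j := by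
          simp [Finsupp.single_apply, if_neg (fun h : i = j => hij h)]
        rw [e1, e2, tsub_right_comm, mul_right_comm]
  | add p q hp hq => simp [hp, hq]

private lemma fold_pair (i j : Fin m) (hij : i ≠ j) (α : Fin m →₀ ℕ) (l : List (Fin m))
    (hl : l.Nodup) (hi : i ∈ l) (hj : j ∈ l) (hαi : α i = 1) (hαj : α j = 1)
    (h0 : ∀ x ∈ l, x ≠ i → x ≠ j → α x = 0) (f : MvPolynomial (Fin m) ℂ) :
    l.foldr (fun i g => (fun h => MvPolynomial.pderiv i h)^[α i] g) f
      = pderiv i (pderiv j f) := by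
  induction l with
  | nil => cases hi
  | cons a t ih =>
      obtain ⟨ha, ht⟩ := List.nodup_cons.mp hl
      rw [List.foldr_cons]
      by_cases hai : a = i
      · subst hai
        have hjt : j ∈ t := by
          rcases List.mem_cons.mp hj with h' | h'
          · exact absurd h'.symm hij
          · exact h'
        rw [fold_single j 1 α t ht hjt hαj
          (fun x hx hxj => h0 x (List.mem_cons_of_mem a hx)
            (fun hxa => ha (hxa ▸ hx)) hxj), hαi]
        rfl
      · by_cases haj : a = j
        · subst haj
          have hit : i ∈ t := by
            rcases List.mem_cons.mp hi with h' | h'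
            · exact absurd h'.symm hai
            · exact h'
          rw [fold_single i 1 α t ht hit hαi
            (fun x hx hxi => h0 x (List.mem_cons_of_mem a hx) hxi
              (fun hxa => ha (hxa ▸ hx))), hαj]
          exact pderiv_comm' a i f ▸ rfl
        · rw [h0 a (List.mem_cons_self) hai haj, Function.iterate_zero, id,
            ih ht (by rcases List.mem_cons.mp hi with h'|h'; exact absurd h'.symm hai; exact h')
              (by rcases List.mem_cons.mp hj with h'|h'; exact absurd h'.symm haj; exact h')
              (fun x hx => h0 x (List.mem_cons_of_mem a hx))]

/-- Iterated partial derivative `∂^α f`: `MvPolynomial.pderiv i` is applied `α i` times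
for each variable `i`. -/
noncomputable def pdPow {n : ℕ} (α : Fin n →₀ ℕ) (f : MvPolynomial (Fin n) ℂ) :
    MvPolynomial (Fin n) ℂ :=
  (List.finRange n).foldr (fun i g => (fun h => MvPolynomial.pderiv i h)^[α i] g) f

/-- `g(∂)f`: the polynomial differential operator associated to `g` applied to `f`. -/
noncomputable def apolarAct {n : ℕ} (g f : MvPolynomial (Fin n) ℂ) :
    MvPolynomial (Fin n) ℂ :=
  (AddMonoidAlgebra.coeff g).sum fun α c => c • pdPow α f

private lemma pdPow_sq (i : Fin m) (f : MvPolynomial (Fin m) ℂ) :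
    pdPow (Finsupp.single i 2) f = pderiv i (pderiv i f) := by
  rw [pdPow, fold_single i 2 _ _ (List.nodup_finRange m) (List.mem_finRange i)
    (by simp) (fun x _ hx => by simp [Finsupp.single_apply, if_neg (fun h : i = x => hx h.symm)])]
  rfl

private lemma pdPow_pair (i j : Fin m) (hij : i ≠ j) (f : MvPolynomial (Fin m) ℂ) :
    pdPow (Finsupp.single i 1 + Finsupp.single j 1) f = pderiv i (pderiv j f) := by
  rw [pdPow, fold_pair i j hij _ _ (List.nodup_finRange m) (List.mem_finRange i)
    (List.mem_finRange j)
    (by simp [Finsupp.single_apply, if_neg (fun h : j = i => hij h.symm)])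
    (by simp [Finsupp.single_apply, if_neg (fun h : i = j => hij h)])
    (fun x _ hxi hxj => by
      simp [Finsupp.single_apply, if_neg (fun h : i = x => hxi h.symm),
        if_neg (fun h : j = x => hxj h.symm)]) ]

private lemma apolarAct_monomial (α : Fin m →₀ ℕ) (c : ℂ) (f : MvPolynomial (Fin m) ℂ) :
    apolarAct (monomial α c) f = c • pdPow α f := by
  rw [apolarAct]
  exact sum_monomial_eq (b := fun α c => c • pdPow α f) (zero_smul ℂ _)

private lemma apolarAct_add (g₁ g₂ f : MvPolynomial (Fin m) ℂ) :
    apolarAct (g₁ + g₂) f = apolarAct g₁ f + apolarAct g₂ f := by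
  unfold apolarAct; rw [AddMonoidAlgebra.coeff_add]; exact Finsupp.sum_add_index' (fun α => zero_smul ℂ _) (fun α c₁ c₂ => add_smul c₁ c₂ _)

private lemma apolarAct_sum {ι : Type*} [DecidableEq ι] (s : Finset ι) (g : ι → MvPolynomial (Fin m) ℂ)
    (f : MvPolynomial (Fin m) ℂ) :
    apolarAct (∑ i ∈ s, g i) f = ∑ i ∈ s, apolarAct (g i) f := by
  induction s using Finset.induction_on with
  | empty => simp [apolarAct, Finsupp.sum_zero_index]
  | insert _ _ h ih =>
      rw [Finset.sum_insert h, Finset.sum_insert h, apolarAct_add, ih]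

private lemma pderiv_pow_C (i : Fin m) (p : MvPolynomial (Fin m) ℂ) (k : ℕ) :
    pderiv i (p ^ k) = C (k : ℂ) * p ^ (k - 1) * pderiv i p := by
  rw [pderiv_pow, map_natCast]


/-- The quadric `q = x_0^2 + ⋯ + x_{n-2}^2 + x_{n-1}·x_n` in `ℂ[x_0,…,x_n]`. -/
noncomputable def qForm (n : ℕ) : MvPolynomial (Fin (n + 1)) ℂ :=
  (∑ i ∈ Finset.univ.filter (fun i : Fin (n + 1) => (i : ℕ) + 2 ≤ n), X i ^ 2)
    + X (⟨n - 1, by omega⟩ : Fin (n + 1)) * X (⟨n, by omega⟩ : Fin (n + 1))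

/-- The inverse quadric `q^{-1} = (1/4)(y_0^2 + ⋯ + y_{n-2}^2) + y_{n-1}·y_n`. -/
noncomputable def qInv (n : ℕ) : MvPolynomial (Fin (n + 1)) ℂ :=
  C (1 / 4 : ℂ) *
      (∑ i ∈ Finset.univ.filter (fun i : Fin (n + 1) => (i : ℕ) + 2 ≤ n), X i ^ 2)
    + X (⟨n - 1, by omega⟩ : Fin (n + 1)) * X (⟨n, by omega⟩ : Fin (n + 1))

/-- `q^{-1}(∂)(q^r) = (r(r−1) + r(n+1)/2) · q^{r−1}`. -/
theorem statement3 (n r : ℕ) (hn : 1 ≤ n) (hr : 1 ≤ r) :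
    apolarAct (qInv n) (qForm n ^ r)
      = C ((r : ℂ) * ((r : ℂ) - 1) + (r : ℂ) * ((n : ℂ) + 1) / 2) * qForm n ^ (r - 1) := by
  set a : Fin (n + 1) := ⟨n - 1, by omega⟩ with ha
  set b : Fin (n + 1) := ⟨n, by omega⟩ with hb
  set S : Finset (Fin (n + 1)) :=
    Finset.univ.filter (fun i : Fin (n + 1) => (i : ℕ) + 2 ≤ n) with hS
  set q : MvPolynomial (Fin (n + 1)) ℂ := qForm n with hqdef
  set R : ℂ := (r : ℂ) with hR
  have hab : a ≠ b := by simp only [ha, hb, ne_eq, Fin.mk.injEq]; omega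
  have hmem : ∀ i ∈ S, (i : ℕ) + 2 ≤ n := fun i hi => (Finset.mem_filter.mp hi).2
  have hia : ∀ i ∈ S, i ≠ a := fun i hi => by
    have := hmem i hi; simp only [ha, ne_eq, Fin.ext_iff]; omega
  have hib : ∀ i ∈ S, i ≠ b := fun i hi => by
    have := hmem i hi; simp only [hb, ne_eq, Fin.ext_iff]; omega
  have hq : q = (∑ i ∈ S, X i ^ 2) + X a * X b := rfl
  -- first derivatives of q
  have hdq : ∀ i ∈ S, pderiv i q = C (2 : ℂ) * X i := by
    intro i hi
    rw [hq, map_add, map_sum, pderiv_mul, pderiv_X_of_ne (Ne.symm (hia i hi)),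
      pderiv_X_of_ne (Ne.symm (hib i hi)),
      Finset.sum_eq_single i (fun j _ hji => by rw [pderiv_pow, pderiv_X_of_ne hji]; ring)
        (fun h => absurd hi h), pderiv_pow, pderiv_X_self]
    have : ((2 : ℕ) : MvPolynomial (Fin (n + 1)) ℂ) = C (2 : ℂ) := by
      simp [map_ofNat]
    rw [this]; ring
  have hdqa : pderiv a q = X b := by
    rw [hq, map_add, map_sum, pderiv_mul, pderiv_X_self, pderiv_X_of_ne (Ne.symm hab),
      Finset.sum_eq_zero (fun j hj => by
        rw [pderiv_pow, pderiv_X_of_ne (hia j hj)]; ring)]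
    ring
  have hdqb : pderiv b q = X a := by
    rw [hq, map_add, map_sum, pderiv_mul, pderiv_X_self, pderiv_X_of_ne hab,
      Finset.sum_eq_zero (fun j hj => by
        rw [pderiv_pow, pderiv_X_of_ne (hib j hj)]; ring)]
    ring
  have er2 : r - 1 - 1 = r - 2 := by omega
  have ecast : ((r - 1 : ℕ) : ℂ) = R - 1 := by
    rw [hR, Nat.cast_sub hr, Nat.cast_one]
  -- second derivatives
  have k1 : ∀ i ∈ S, pderiv i (pderiv i (q ^ r)) =
      C (2:ℂ) * C (2:ℂ) * (C R * C (R - 1) * (q ^ (r - 2) * X i ^ 2))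
        + C (2:ℂ) * (C R * q ^ (r - 1)) := by
    intro i hi
    rw [pderiv_pow_C, hdq i hi, pderiv_mul, pderiv_C_mul, pderiv_C_mul, pderiv_pow_C,
      hdq i hi, pderiv_X_self, er2, ecast]
    ring
  have k2 : pderiv a (pderiv b (q ^ r)) =
      C R * C (R - 1) * (q ^ (r - 2) * (X a * X b)) + C R * q ^ (r - 1) := by
    rw [pderiv_pow_C, hdqb, pderiv_mul, pderiv_C_mul, pderiv_pow_C, hdqa,
      pderiv_X_self, er2, ecast]
    ring
  -- qInv as a sum of monomials
  have hqinv : qInv n = (∑ i ∈ S, monomial (Finsupp.single i 2) (1/4 : ℂ))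
      + monomial (Finsupp.single a 1 + Finsupp.single b 1) (1 : ℂ) := by
    rw [qInv, Finset.mul_sum]
    congr 1
    · exact Finset.sum_congr rfl fun i _ => by
        rw [X_pow_eq_monomial, C_mul_monomial, mul_one]
    · rw [X, X, monomial_mul, mul_one]
  -- cardinality of S
  have hcard : S.card = n - 1 := by
    have : S = Finset.map
        ⟨fun i : Fin (n - 1) => (⟨(i : ℕ), by omega⟩ : Fin (n + 1)),
          fun x y h => Fin.ext (by simpa [Fin.ext_iff] using h)⟩ Finset.univ := by
      ext j
      simp only [hS, Finset.mem_filter, Finset.mem_univ, true_and, Finset.mem_map,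
        Function.Embedding.coeFn_mk]
      constructor
      · intro h; exact ⟨⟨(j : ℕ), by omega⟩, Fin.ext rfl⟩
      · rintro ⟨i, hi⟩
        have hi' : (i : ℕ) = (j : ℕ) := congrArg Fin.val hi
        omega
    rw [this, Finset.card_map, Finset.card_univ, Fintype.card_fin]
  -- expand apolarAct
  rw [hqinv, apolarAct_add, apolarAct_sum, apolarAct_monomial, one_smul,
    pdPow_pair a b hab, k2,
    Finset.sum_congr rfl (fun i hi => by
      rw [apolarAct_monomial, pdPow_sq, k1 i hi, smul_eq_C_mul]),
    Finset.sum_congr rfl (fun i (hi : i ∈ S) => by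
      rw [mul_add]),
    Finset.sum_add_distrib]
  have hc : C (1/4 : ℂ) * (C 2 * C 2) = (1 : MvPolynomial (Fin (n+1)) ℂ) := by
    rw [← map_mul, ← map_mul]; norm_num
  rw [Finset.sum_congr rfl (fun x (hx : x ∈ S) =>
      show _ = (C (1/4:ℂ) * (C 2 * C 2)) * ((C R * C (R-1) * q^(r-2)) * X x^2) from by ring),
    ← Finset.mul_sum, hc, one_mul, Finset.sum_const, hcard]
  have hcomb : (C R * C (R-1) * q^(r-2)) * (∑ i ∈ S, X i^2)
      + C R * C (R-1) * (q^(r-2) * (X a * X b)) = C R * C (R-1) * q^(r-1) := by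
    have h1 : (C R * C (R-1) * q^(r-2)) * (∑ i ∈ S, X i^2)
        + C R * C (R-1) * (q^(r-2) * (X a * X b)) = C R * C (R-1) * (q^(r-2) * q) := by
      rw [hq]; ring
    rw [h1]
    rcases eq_or_lt_of_le hr with h1' | h2
    · have hz : R - 1 = 0 := by rw [hR, ← h1']; norm_num
      rw [hz, map_zero]; ring
    · rw [← pow_succ, show r - 2 + 1 = r - 1 from by omega]
  rw [nsmul_eq_mul,
    show ((n - 1 : ℕ) : MvPolynomial (Fin (n+1)) ℂ) = C ((n:ℂ) - 1) from by
      rw [← map_natCast (C : ℂ →+* MvPolynomial (Fin (n+1)) ℂ) (n-1), Nat.cast_sub hn,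
        Nat.cast_one],
    show (R * (R - 1) + R * ((n:ℂ) + 1) / 2 : ℂ)
        = R * (R - 1) + (((n:ℂ) - 1) * (1/4 * (2 * R)) + R) from by ring]
  simp only [map_add, map_mul]
  have hms : ∑ i ∈ S, C R * C (R-1) * q^(r-2) * X i^2
      = C R * C (R-1) * q^(r-2) * ∑ i ∈ S, X i^2 := (Finset.mul_sum _ _ _).symm
  linear_combination hcomb + hms
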